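/- Let L : V × Y → [0,B] be a (λ,θ)-self-bounding Lipschitz loss with λ > 0 and θ ∈ [0,1/2], with respect to the sup-norm on V ⊆ ℝ^q. Let f₀, f₁ : X → V and (x₁,y₁),…,(x_n,y_n) ∈ X × Y, and suppose the empirical risks satisfy (1/n)∑_i L(f₀(x_i),y_i) ≤ r and (1/n)∑_i L(f₁(x_i),y_i) ≤ r for some r > 0. Then √((1/n)∑_{i=1}^{n} (L(f₀(x_i),y_i) − L(f₁(x_i),y_i))²) ≤ 2^θ·λ·r^θ·max_{i∈[n], j∈[q]} |π_j(f₀(x_i)) − π_j(f₁(x_i))|. -/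

import Mathlib

theorem empirical_l2_distance_bound
    {X Y : Type*} (q n : ℕ) [NeZero q] [NeZero n]
    (L : (Fin q → ℝ) → Y → ℝ) (B : ℝ) (hB : 0 < B)
    (hLbounds : ∀ u y, L u y ∈ Set.Icc (0 : ℝ) B)
    (lam θ : ℝ) (hlam : 0 < lam) (hθ0 : 0 ≤ θ) (hθ1 : θ ≤ 1 / 2)
    (hSBL : ∀ (y : Y) (u v : Fin q → ℝ),
      |L u y - L v y| ≤ lam * max (L u y) (L v y) ^ θ * ‖u - v‖)
    (f₀ f₁ : X → Fin q → ℝ) (x : Fin n → X) (y : Fin n → Y) (r : ℝ) (hr : 0 < r)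
    (h₀ : (1 / (n : ℝ)) * ∑ i, L (f₀ (x i)) (y i) ≤ r)
    (h₁ : (1 / (n : ℝ)) * ∑ i, L (f₁ (x i)) (y i) ≤ r) :
    Real.sqrt ((1 / (n : ℝ)) * ∑ i, (L (f₀ (x i)) (y i) - L (f₁ (x i)) (y i)) ^ 2) ≤
      2 ^ θ * lam * r ^ θ *
        ⨆ i : Fin n, ⨆ j : Fin q, |f₀ (x i) j - f₁ (x i) j| := by
  set M : ℝ := ⨆ i : Fin n, ⨆ j : Fin q, |f₀ (x i) j - f₁ (x i) j| with hM
  have hn0 : (0 : ℝ) < n := by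
    exact_mod_cast Nat.pos_of_ne_zero (NeZero.ne n)
  -- M is an upper bound and nonneg
  have hMuv : ∀ i : Fin n, ‖f₀ (x i) - f₁ (x i)‖ ≤ M := by
    intro i
    have hbdd : ∀ i : Fin n, BddAbove (Set.range fun j : Fin q => |f₀ (x i) j - f₁ (x i) j|) :=
      fun i => (Set.finite_range _).bddAbove
    have hinner : ∀ i : Fin n, ‖f₀ (x i) - f₁ (x i)‖ ≤ ⨆ j : Fin q, |f₀ (x i) j - f₁ (x i) j| := by
      intro i
      have h0 : (0 : ℝ) ≤ ⨆ j : Fin q, |f₀ (x i) j - f₁ (x i) j| :=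
        le_trans (abs_nonneg _) (le_ciSup (hbdd i) ⟨0, Nat.pos_of_ne_zero (NeZero.ne q)⟩)
      rw [pi_norm_le_iff_of_nonneg h0]
      intro j
      simpa [Real.norm_eq_abs] using le_ciSup (hbdd i) j
    refine (hinner i).trans ?_
    exact le_ciSup (f := fun i : Fin n => ⨆ j : Fin q, |f₀ (x i) j - f₁ (x i) j|)
      (Set.finite_range _).bddAbove i
  have hM0 : 0 ≤ M := le_trans (norm_nonneg _) (hMuv ⟨0, Nat.pos_of_ne_zero (NeZero.ne n)⟩)
  -- abbreviations
  set m : Fin n → ℝ := fun i => max (L (f₀ (x i)) (y i)) (L (f₁ (x i)) (y i)) with hm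
  have hm0 : ∀ i, 0 ≤ m i := fun i => le_trans (hLbounds (f₀ (x i)) (y i)).1 (le_max_left _ _)
  -- pointwise bound
  have key : ∀ i : Fin n, (L (f₀ (x i)) (y i) - L (f₁ (x i)) (y i)) ^ 2
      ≤ lam ^ 2 * M ^ 2 * m i ^ (2 * θ) := by
    intro i
    have h1 : |L (f₀ (x i)) (y i) - L (f₁ (x i)) (y i)| ≤ lam * m i ^ θ * M :=
      (hSBL (y i) (f₀ (x i)) (f₁ (x i))).trans
        (by
          have := hMuv i
          have hpos : 0 ≤ lam * m i ^ θ := mul_nonneg hlam.le (Real.rpow_nonneg (hm0 i) θ)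
          exact mul_le_mul_of_nonneg_left this hpos)
    have h2 : (L (f₀ (x i)) (y i) - L (f₁ (x i)) (y i)) ^ 2 ≤ (lam * m i ^ θ * M) ^ 2 := by
      rw [← sq_abs]
      exact pow_le_pow_left₀ (abs_nonneg _) h1 2
    refine h2.trans_eq ?_
    have : (m i ^ θ) ^ 2 = m i ^ (2 * θ) := by
      rw [← Real.rpow_natCast (m i ^ θ) 2, ← Real.rpow_mul (hm0 i)]
      ring_nf
    rw [mul_pow, mul_pow, this]
    ring
  -- sum bound
  have hsum : (1 / (n : ℝ)) * ∑ i, (L (f₀ (x i)) (y i) - L (f₁ (x i)) (y i)) ^ 2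
      ≤ lam ^ 2 * M ^ 2 * ((1 / (n : ℝ)) * ∑ i, m i ^ (2 * θ)) := by
    rw [mul_comm (lam ^ 2 * M ^ 2), mul_assoc]
    refine mul_le_mul_of_nonneg_left ?_ (by positivity)
    rw [Finset.sum_mul]
    refine Finset.sum_le_sum fun i _ => ?_
    rw [mul_comm]
    exact key i
  -- Jensen
  have hmsum : (1 / (n : ℝ)) * ∑ i, m i ≤ 2 * r := by
    have : (1 / (n : ℝ)) * ∑ i, m i ≤
        (1 / (n : ℝ)) * ∑ i, L (f₀ (x i)) (y i) + (1 / (n : ℝ)) * ∑ i, L (f₁ (x i)) (y i) := by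
      rw [← mul_add, ← Finset.sum_add_distrib]
      refine mul_le_mul_of_nonneg_left (Finset.sum_le_sum fun i _ => ?_) (by positivity)
      exact max_le_add_of_nonneg (hLbounds _ _).1 (hLbounds _ _).1
    linarith
  have hjensen : (1 / (n : ℝ)) * ∑ i, m i ^ (2 * θ) ≤ (2 * r) ^ (2 * θ) := by
    rcases eq_or_lt_of_le hθ0 with hθz | hθpos
    · simp [← hθz]
    · have h2θ : 0 < 2 * θ := by linarith
      have hp : (1 : ℝ) ≤ 1 / (2 * θ) := by
        rw [le_div_iff₀ h2θ]; linarith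
      have := Real.arith_mean_le_rpow_mean (Finset.univ : Finset (Fin n))
        (fun _ => 1 / (n : ℝ)) (fun i => m i ^ (2 * θ))
        (fun i _ => by positivity)
        (by rw [Finset.sum_const, Finset.card_univ, Fintype.card_fin, nsmul_eq_mul]; exact mul_one_div_cancel hn0.ne')
        (fun i _ => Real.rpow_nonneg (hm0 i) _) hp
      have heq : ∀ i : Fin n, (m i ^ (2 * θ)) ^ (1 / (2 * θ)) = m i := by
        intro i
        rw [← Real.rpow_mul (hm0 i), mul_one_div, div_self h2θ.ne', Real.rpow_one]
      simp only [heq] at this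
      rw [Finset.mul_sum]
      calc ∑ i, (1 / (n : ℝ)) * m i ^ (2 * θ)
          ≤ (∑ i, (1 / (n : ℝ)) * m i) ^ (1 / (1 / (2 * θ))) := this
        _ = ((1 / (n : ℝ)) * ∑ i, m i) ^ (2 * θ) := by
            rw [one_div_one_div, Finset.mul_sum]
        _ ≤ (2 * r) ^ (2 * θ) := by
            refine Real.rpow_le_rpow ?_ hmsum h2θ.le
            rw [Finset.mul_sum]
            exact Finset.sum_nonneg fun i _ => mul_nonneg (by positivity) (hm0 i)
  -- combine
  have hfinal : (1 / (n : ℝ)) * ∑ i, (L (f₀ (x i)) (y i) - L (f₁ (x i)) (y i)) ^ 2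
      ≤ (2 ^ θ * lam * r ^ θ * M) ^ 2 := by
    have hrhs : (2 ^ θ * lam * r ^ θ * M) ^ 2 = lam ^ 2 * M ^ 2 * (2 * r) ^ (2 * θ) := by
      have h2 : ((2 : ℝ) ^ θ) ^ 2 = (2 : ℝ) ^ (2 * θ) := by
        rw [← Real.rpow_natCast ((2 : ℝ) ^ θ) 2, ← Real.rpow_mul (by norm_num)]
        ring_nf
      have h3 : (r ^ θ) ^ 2 = r ^ (2 * θ) := by
        rw [← Real.rpow_natCast (r ^ θ) 2, ← Real.rpow_mul hr.le]
        ring_nf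
      rw [Real.mul_rpow (by norm_num) hr.le]
      rw [mul_pow, mul_pow, mul_pow, h2, h3]
      ring
    rw [hrhs]
    calc (1 / (n : ℝ)) * ∑ i, (L (f₀ (x i)) (y i) - L (f₁ (x i)) (y i)) ^ 2
        ≤ lam ^ 2 * M ^ 2 * ((1 / (n : ℝ)) * ∑ i, m i ^ (2 * θ)) := hsum
      _ ≤ lam ^ 2 * M ^ 2 * (2 * r) ^ (2 * θ) :=
          mul_le_mul_of_nonneg_left hjensen (by positivity)
  calc Real.sqrt ((1 / (n : ℝ)) * ∑ i, (L (f₀ (x i)) (y i) - L (f₁ (x i)) (y i)) ^ 2)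
      ≤ Real.sqrt ((2 ^ θ * lam * r ^ θ * M) ^ 2) := Real.sqrt_le_sqrt hfinal
    _ = 2 ^ θ * lam * r ^ θ * M := Real.sqrt_sq (mul_nonneg (by positivity) hM0)
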